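/- Suppose (x*, y*) is a saddle-point of f. Then for every k ∈ ℕ: ∑_{i=0}^{k} ( f(x*, y^{i+1}) + f(x^{i+1}, ȳ^{i+1}) − f(x*, ȳ^{i+1}) − f(x^{i+1}, y*) + f(x̄^i, y*) − f(x̄^i, y^{i+1}) ) ≤ ∑_{i=0}^{k} (1/(2σ_i))(‖y* − y^i‖² − ‖y* − y^{i+1}‖² − ‖y^i − y^{i+1}‖²) + ∑_{i=0}^{k} (1/(2τ_i))(‖x* − x^i‖² − ‖x* − x^{i+1}‖² − ‖x^i − x^{i+1}‖²). -/
import Mathlib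


open RealInnerProductSpace

/-- Corollary 3.7(iii): summed inequality at a saddle-point. -/
theorem stmt_6
    {H₁ : Type*} [NormedAddCommGroup H₁] [InnerProductSpace ℝ H₁] [CompleteSpace H₁]
    {H₂ : Type*} [NormedAddCommGroup H₂] [InnerProductSpace ℝ H₂] [CompleteSpace H₂]
    (X : Set H₁) (Y : Set H₂)
    (hXne : X.Nonempty) (hXcl : IsClosed X) (hXcv : Convex ℝ X)
    (hYne : Y.Nonempty) (hYcl : IsClosed Y) (hYcv : Convex ℝ Y)
    (f : H₁ → H₂ → ℝ)
    (hfcvx : ∀ y ∈ Y, ConvexOn ℝ X (fun x => f x y))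
    (hfccv : ∀ x ∈ X, ConcaveOn ℝ Y (fun y => f x y))
    (xs : ℕ → H₁) (ys : ℕ → H₂) (hxX : ∀ k, xs k ∈ X) (hyY : ∀ k, ys k ∈ Y)
    (xbs : ℕ → H₁) (ybs : ℕ → H₂)
    (τs σs : ℕ → ℝ) (hτ : ∀ k, 0 < τs k) (hσ : ∀ k, 0 < σs k)
    (hA : ∀ k, ∀ y ∈ Y,
      (1/(2*σs k)) * (‖ys k - ys (k+1)‖^2 + ‖y - ys (k+1)‖^2 - ‖y - ys k‖^2)
        + f (xbs k) y - f (xbs k) (ys (k+1)) ≤ 0)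
    (hB : ∀ k, ∀ x ∈ X,
      (1/(2*τs k)) * (‖xs k - xs (k+1)‖^2 + ‖x - xs (k+1)‖^2 - ‖x - xs k‖^2)
        + f (xs (k+1)) (ybs (k+1)) - f x (ybs (k+1)) ≤ 0)
    (xstar : H₁) (ystar : H₂) (hxstar : xstar ∈ X) (hystar : ystar ∈ Y)
    (hsaddle : ∀ x ∈ X, ∀ y ∈ Y, f xstar y ≤ f xstar ystar ∧ f xstar ystar ≤ f x ystar)
    (k : ℕ) :
    ∑ i ∈ Finset.range (k+1),
        (f xstar (ys (i+1)) + f (xs (i+1)) (ybs (i+1)) - f xstar (ybs (i+1))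
          - f (xs (i+1)) ystar + f (xbs i) ystar - f (xbs i) (ys (i+1)))
    ≤ ∑ i ∈ Finset.range (k+1),
        (1/(2*σs i)) * (‖ystar - ys i‖^2 - ‖ystar - ys (i+1)‖^2 - ‖ys i - ys (i+1)‖^2)
      + ∑ i ∈ Finset.range (k+1),
        (1/(2*τs i)) * (‖xstar - xs i‖^2 - ‖xstar - xs (i+1)‖^2 - ‖xs i - xs (i+1)‖^2) := by
  rw [← Finset.sum_add_distrib]
  apply Finset.sum_le_sum
  intro i _
  have h1 := hA i ystar hystar
  have h2 := hB i xstar hxstar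
  have h3 := (hsaddle (xs (i+1)) (hxX (i+1)) (ys (i+1)) (hyY (i+1)))
  linarith [h3.1, h3.2]
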